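/- The alphabet model on a one-dimensional interval (lattice {1,…,N} with exchanges only at bonds {x,x+1}, 1 ≤ x ≤ N-1) satisfies the Kolmogorov cycle criterion for every choice of positive rates c(i,j), hence is always reversible. Equivalently: for every cyclic sequence of adjacent transpositions of N labeled particles on the interval returning to the initial configuration, and every pair of particles i,j, the number of transpositions swapping i leftward past j equals the number swapping i rightward past j (N_{i,j} = N_{j,i}). -/

import Mathlib

lemma adj_swap_ind (N a : ℕ) (ha : a + 1 < N) (p q : Fin N) (hpq : p ≠ q) :
    ((if ((Equiv.swap (⟨a, Nat.lt_of_succ_lt ha⟩ : Fin N) ⟨a+1, ha⟩ p : Fin N) : ℕ)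
        < ((Equiv.swap (⟨a, Nat.lt_of_succ_lt ha⟩ : Fin N) ⟨a+1, ha⟩ q : Fin N) : ℕ)
      then (1:ℤ) else 0) - (if (p : ℕ) < (q : ℕ) then 1 else 0))
    = (if p = ⟨a+1, ha⟩ ∧ q = ⟨a, Nat.lt_of_succ_lt ha⟩ then 1 else 0)
      - (if p = ⟨a, Nat.lt_of_succ_lt ha⟩ ∧ q = ⟨a+1, ha⟩ then 1 else 0) := by
  have hpq' : (p : ℕ) ≠ (q : ℕ) := fun h => hpq (Fin.ext h)
  rcases p with ⟨pv, hpv⟩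
  rcases q with ⟨qv, hqv⟩
  simp only [Equiv.swap_apply_def, Fin.ext_iff, Fin.mk.injEq, Fin.val_mk] at *
  split_ifs <;> simp_all <;> omega

open Fin.NatCast

theorem stmt_15 (N L : ℕ)
    (η : Fin (L + 1) → (Fin N ≃ Fin N)) (x : Fin L → ℕ)
    (hx : ∀ l : Fin L, x l + 1 < N)
    (hstep : ∀ l : Fin L,
      η l.succ = (Equiv.swap (⟨x l, Nat.lt_of_succ_lt (hx l)⟩ : Fin N)
        (⟨x l + 1, hx l⟩ : Fin N)).trans (η l.castSucc))
    (hcyc : η (Fin.last L) = η 0)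
    (i j : Fin N) (hij : i ≠ j) :
    (Finset.univ.filter (fun l : Fin L =>
        η l.castSucc ⟨x l, Nat.lt_of_succ_lt (hx l)⟩ = i ∧
        η l.castSucc ⟨x l + 1, hx l⟩ = j)).card =
    (Finset.univ.filter (fun l : Fin L =>
        η l.castSucc ⟨x l, Nat.lt_of_succ_lt (hx l)⟩ = j ∧
        η l.castSucc ⟨x l + 1, hx l⟩ = i)).card := by
  classical
  set F : (Fin N ≃ Fin N) → ℤ := fun σ => if ((σ.symm i : Fin N) : ℕ) < ((σ.symm j : Fin N) : ℕ) then 1 else 0 with hF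
  -- per-step identity
  have key : ∀ l : Fin L,
      F (η l.succ) - F (η l.castSucc)
        = (if η l.castSucc ⟨x l, Nat.lt_of_succ_lt (hx l)⟩ = j ∧
              η l.castSucc ⟨x l + 1, hx l⟩ = i then (1:ℤ) else 0)
          - (if η l.castSucc ⟨x l, Nat.lt_of_succ_lt (hx l)⟩ = i ∧
              η l.castSucc ⟨x l + 1, hx l⟩ = j then 1 else 0) := by
    intro l
    have hs := hstep l
    set e := η l.castSucc with he
    set u : Fin N := ⟨x l, Nat.lt_of_succ_lt (hx l)⟩ with hu
    set v : Fin N := ⟨x l + 1, hx l⟩ with hv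
    have hsi : (η l.succ).symm i = Equiv.swap u v (e.symm i) := by
      rw [hs]; simp [Equiv.symm_trans_apply]
    have hsj : (η l.succ).symm j = Equiv.swap u v (e.symm j) := by
      rw [hs]; simp [Equiv.symm_trans_apply]
    have hci : e u = i ↔ e.symm i = u := by
      constructor
      · intro h; rw [← h]; simp
      · intro h; rw [← h]; simp
    have hcj : e v = j ↔ e.symm j = v := by
      constructor
      · intro h; rw [← h]; simp
      · intro h; rw [← h]; simp
    have hci' : e v = i ↔ e.symm i = v := by
      constructor
      · intro h; rw [← h]; simp
      · intro h; rw [← h]; simp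
    have hcj' : e u = j ↔ e.symm j = u := by
      constructor
      · intro h; rw [← h]; simp
      · intro h; rw [← h]; simp
    have hne : e.symm i ≠ e.symm j := fun h => hij (e.symm.injective h)
    have := adj_swap_ind N (x l) (hx l) (e.symm i) (e.symm j) hne
    simp only [hF, hsi, hsj]
    rw [this]
    have c1 : (e u = j ∧ e v = i) ↔ (e.symm i = v ∧ e.symm j = u) := by
      rw [hcj', hci']; exact and_comm
    have c2 : (e u = i ∧ e v = j) ↔ (e.symm i = u ∧ e.symm j = v) := by
      rw [hci, hcj]
    rw [if_congr c1 rfl rfl, if_congr c2 rfl rfl]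
  -- telescoping
  let g : ℕ → ℤ := fun n => F (η (n : Fin (L + 1)))
  have hcast : ∀ n : ℕ, n < L + 1 → ((n : Fin (L + 1)) : ℕ) = n := fun n h =>
    Fin.val_cast_of_lt h
  have hgc : ∀ l : Fin L, g l = F (η l.castSucc) := by
    intro l
    have : ((l : ℕ) : Fin (L + 1)) = l.castSucc := by
      apply Fin.ext
      rw [hcast _ (by omega)]
      simp
    simp only [g, this]
  have hgs : ∀ l : Fin L, g ((l : ℕ) + 1) = F (η l.succ) := by
    intro l
    have : (((l : ℕ) + 1 : ℕ) : Fin (L + 1)) = l.succ := by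
      apply Fin.ext
      rw [hcast _ (by omega)]
      simp
    simp only [g, this]
  have tele : ∑ n ∈ Finset.range L, (g (n + 1) - g n) = g L - g 0 :=
    Finset.sum_range_sub g L
  have hgl : g L = F (η (Fin.last L)) := by
    have : ((L : ℕ) : Fin (L + 1)) = Fin.last L := by
      apply Fin.ext
      rw [hcast _ (by omega)]
      simp
    simp only [g, this]
  have hg0 : g 0 = F (η 0) := by norm_num [g]
  have tele0 : ∑ n ∈ Finset.range L, (g (n + 1) - g n) = 0 := by
    rw [tele, hgl, hg0, hcyc, sub_self]
  have hsum : ∑ l : Fin L, (g ((l : ℕ) + 1) - g (l : ℕ)) = 0 := by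
    rw [Fin.sum_univ_eq_sum_range (fun n => g (n + 1) - g n) L]
    exact tele0
  have hsum2 : ∑ l : Fin L,
      ((if η l.castSucc ⟨x l, Nat.lt_of_succ_lt (hx l)⟩ = j ∧
            η l.castSucc ⟨x l + 1, hx l⟩ = i then (1:ℤ) else 0)
        - (if η l.castSucc ⟨x l, Nat.lt_of_succ_lt (hx l)⟩ = i ∧
            η l.castSucc ⟨x l + 1, hx l⟩ = j then 1 else 0)) = 0 := by
    have heq : ∀ l ∈ (Finset.univ : Finset (Fin L)),
        ((if η l.castSucc ⟨x l, Nat.lt_of_succ_lt (hx l)⟩ = j ∧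
            η l.castSucc ⟨x l + 1, hx l⟩ = i then (1:ℤ) else 0)
        - (if η l.castSucc ⟨x l, Nat.lt_of_succ_lt (hx l)⟩ = i ∧
            η l.castSucc ⟨x l + 1, hx l⟩ = j then 1 else 0))
          = g ((l : ℕ) + 1) - g (l : ℕ) := by
      intro l _
      rw [hgs l, hgc l]
      exact (key l).symm
    rw [Finset.sum_congr rfl heq, hsum]
  rw [Finset.sum_sub_distrib] at hsum2
  simp only [Finset.sum_boole] at hsum2
  have := sub_eq_zero.mp hsum2
  exact_mod_cast this.symm
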